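/- For every m ≥ 1, the ℂ-linear span 𝒜₁ of the type I matrices N_{(m,m)}^q, q ∈ I_{(m,m)}, is closed under matrix multiplication; that is, 𝒜₁ is a (possibly non-unital) subalgebra of Mat_X(ℂ): for all M, N ∈ 𝒜₁, the product M·N lies in 𝒜₁. -/
import Mathlib


/-- Vertex set of the doubled Odd graph: subsets of `Fin (2m+1)` of size `m` or `m+1`. -/
def DoubledOddVertex (m : ℕ) := {y : Finset (Fin (2*m+1)) // y.card = m ∨ y.card = m+1}

instance (m : ℕ) : Fintype (DoubledOddVertex m) := by
  unfold DoubledOddVertex; infer_instance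

instance (m : ℕ) : DecidableEq (DoubledOddVertex m) := by
  unfold DoubledOddVertex; infer_instance

/-- The quadruple `ρ(y,z)`. -/
def rho {n : ℕ} (x0 y z : Finset (Fin n)) : ℤ × ℤ × ℤ × ℤ :=
  (((x0 ∩ y).card : ℤ), ((x0 ∩ z).card : ℤ), ((y ∩ z).card : ℤ),
    ((x0 ∩ y ∩ z).card : ℤ))

/-- The action of a permutation of `Fin (2m+1)` on vertices, by taking images. -/
def permAct (m : ℕ) (σ : Equiv.Perm (Fin (2*m+1))) (y : DoubledOddVertex m) :
    DoubledOddVertex m :=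
  ⟨y.val.image σ, by
    rcases y.2 with h | h
    · exact Or.inl (by rw [Finset.card_image_of_injective _ σ.injective, h])
    · exact Or.inr (by rw [Finset.card_image_of_injective _ σ.injective, h])⟩

/-- The set `I_{(a,b)}` of quadruples realized by pairs of subsets of sizes `a`, `b`. -/
def quadSet (m : ℕ) (x0 : Finset (Fin (2*m+1))) (a b : ℕ) : Set (ℤ × ℤ × ℤ × ℤ) :=
  {q | ∃ y z : Finset (Fin (2*m+1)), y.card = a ∧ z.card = b ∧ rho x0 y z = q}

/-- The orbit indicator matrix `N_{(a,b)}^q`. -/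
noncomputable def orbitMatrix (m : ℕ) (x0 : Finset (Fin (2*m+1))) (a b : ℕ) (q : ℤ × ℤ × ℤ × ℤ) :
    Matrix (DoubledOddVertex m) (DoubledOddVertex m) ℂ :=
  Matrix.of fun y z =>
    if y.val.card = a ∧ z.val.card = b ∧ rho x0 y.val z.val = q then 1 else 0

/-- The centralizer algebra `𝒜` (as a subspace of matrices). -/
noncomputable def centralizer (m : ℕ) (x0 : Finset (Fin (2*m+1))) :
    Submodule ℂ (Matrix (DoubledOddVertex m) (DoubledOddVertex m) ℂ) where
  carrier := {M | ∀ σ : Equiv.Perm (Fin (2*m+1)), x0.image σ = x0 →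
    ∀ y z : DoubledOddVertex m, M (permAct m σ y) (permAct m σ z) = M y z}
  add_mem' := by
    intro a b ha hb σ hσ y z
    simp only [Matrix.add_apply, ha σ hσ y z, hb σ hσ y z]
  zero_mem' := by intro σ hσ y z; rfl
  smul_mem' := by
    intro c M hM σ hσ y z
    simp only [Matrix.smul_apply, hM σ hσ y z]

section AuxOddGraph
open Finset


variable {n : ℕ}

def trip (x0 y z : Finset (Fin n)) (a : Fin n) : Bool × Bool × Bool :=
  (decide (a ∈ x0), decide (a ∈ y), decide (a ∈ z))

lemma atom_system (x0 y z : Finset (Fin n)) :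
    ((univ.filter fun a => trip x0 y z a = (true,true,true)).card = (x0 ∩ y ∩ z).card) ∧
    ((univ.filter fun a => trip x0 y z a = (true,true,false)).card + (x0 ∩ y ∩ z).card = (x0 ∩ y).card) ∧
    ((univ.filter fun a => trip x0 y z a = (true,false,true)).card + (x0 ∩ y ∩ z).card = (x0 ∩ z).card) ∧
    ((univ.filter fun a => trip x0 y z a = (false,true,true)).card + (x0 ∩ y ∩ z).card = (y ∩ z).card) ∧
    ((univ.filter fun a => trip x0 y z a = (true,false,false)).card + (x0 ∩ y).card + (x0 ∩ z).card = x0.card + (x0 ∩ y ∩ z).card) ∧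
    ((univ.filter fun a => trip x0 y z a = (false,true,false)).card + (x0 ∩ y).card + (y ∩ z).card = y.card + (x0 ∩ y ∩ z).card) ∧
    ((univ.filter fun a => trip x0 y z a = (false,false,true)).card + (x0 ∩ z).card + (y ∩ z).card = z.card + (x0 ∩ y ∩ z).card) ∧
    ((univ.filter fun a => trip x0 y z a = (false,false,false)).card + (x0.card + y.card + z.card) + (x0 ∩ y ∩ z).card
      = n + ((x0 ∩ y).card + (x0 ∩ z).card + (y ∩ z).card)) := by
  have httt : univ.filter (fun a => trip x0 y z a = (true,true,true)) = x0 ∩ y ∩ z := by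
    ext a; simp [trip]
  have httf : univ.filter (fun a => trip x0 y z a = (true,true,false)) = (x0 ∩ y) \ z := by
    ext a; simp [trip]; tauto
  have htft : univ.filter (fun a => trip x0 y z a = (true,false,true)) = (x0 ∩ z) \ y := by
    ext a; simp [trip]; tauto
  have hftt : univ.filter (fun a => trip x0 y z a = (false,true,true)) = (y ∩ z) \ x0 := by
    ext a; simp [trip]; tauto
  have htff : univ.filter (fun a => trip x0 y z a = (true,false,false)) = (x0 \ y) \ z := by
    ext a; simp [trip]; tauto
  have hftf : univ.filter (fun a => trip x0 y z a = (false,true,false)) = (y \ x0) \ z := by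
    ext a; simp [trip]; tauto
  have hfft : univ.filter (fun a => trip x0 y z a = (false,false,true)) = (z \ x0) \ y := by
    ext a; simp [trip]; tauto
  have hfff : univ.filter (fun a => trip x0 y z a = (false,false,false)) = ((univ \ x0) \ y) \ z := by
    ext a; simp [trip]; tauto
  have e1 : ((x0 ∩ z) ∩ y) = x0 ∩ y ∩ z := by ext a; simp; tauto
  have e2 : ((y ∩ z) ∩ x0) = x0 ∩ y ∩ z := by ext a; simp; tauto
  have e3 : (x0 \ y) ∩ z = (x0 ∩ z) \ y := by ext a; simp; tauto
  have e4 : (y \ x0) ∩ z = (y ∩ z) \ x0 := by ext a; simp; tauto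
  have e5 : (z \ x0) ∩ y = (y ∩ z) \ x0 := by ext a; simp; tauto
  have e6 : ((univ \ x0) \ y) ∩ z = (z \ x0) \ y := by ext a; simp; tauto
  have e7 : (univ \ x0) ∩ y = y \ x0 := by ext a; simp; tauto
  have e8 : y ∩ x0 = x0 ∩ y := inter_comm _ _
  have e9 : z ∩ x0 = x0 ∩ z := inter_comm _ _
  have c1 := card_sdiff_add_card_inter (x0 ∩ y) z
  have c2 := card_sdiff_add_card_inter (x0 ∩ z) y
  have c3 := card_sdiff_add_card_inter (y ∩ z) x0
  have c4 := card_sdiff_add_card_inter (x0 \ y) z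
  have c5 := card_sdiff_add_card_inter x0 y
  have c6 := card_sdiff_add_card_inter (y \ x0) z
  have c7 := card_sdiff_add_card_inter y x0
  have c8 := card_sdiff_add_card_inter (z \ x0) y
  have c9 := card_sdiff_add_card_inter z x0
  have c10 := card_sdiff_add_card_inter ((univ \ x0) \ y) z
  have c11 := card_sdiff_add_card_inter (univ \ x0) y
  have c12 := card_sdiff_add_card_inter (univ : Finset (Fin n)) x0
  have huniv : (univ : Finset (Fin n)).card = n := by simp
  have huinter : (univ : Finset (Fin n)) ∩ x0 = x0 := by ext a; simp
  rw [e1] at c2; rw [e2] at c3; rw [e3] at c4; rw [e4] at c6; rw [e5] at c8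
  rw [e6] at c10; rw [e7] at c11; rw [e8] at c7; rw [e9] at c9
  rw [huniv, huinter] at c12
  rw [httt, httf, htft, hftt, htff, hftf, hfft, hfff]
  omega

lemma exists_perm (x0 y z y' z' : Finset (Fin n))
    (h2 : y.card = y'.card) (h3 : z.card = z'.card)
    (ha : (x0 ∩ y).card = (x0 ∩ y').card) (hb : (x0 ∩ z).card = (x0 ∩ z').card)
    (hc : (y ∩ z).card = (y' ∩ z').card) (hd : (x0 ∩ y ∩ z).card = (x0 ∩ y' ∩ z').card) :
    ∃ σ : Equiv.Perm (Fin n), x0.image σ = x0 ∧ y.image σ = y' ∧ z.image σ = z' := by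
  classical
  have hfib : ∀ p : Bool × Bool × Bool,
      Fintype.card {a // trip x0 y z a = p} = Fintype.card {a // trip x0 y' z' a = p} := by
    intro p
    rw [Fintype.card_subtype, Fintype.card_subtype]
    obtain ⟨a1,a2,a3,a4,a5,a6,a7,a8⟩ := atom_system x0 y z
    obtain ⟨b1,b2,b3,b4,b5,b6,b7,b8⟩ := atom_system x0 y' z'
    obtain ⟨p1, p2, p3⟩ := p
    cases p1 <;> cases p2 <;> cases p3 <;> omega
  let e : ∀ p, {a // trip x0 y z a = p} ≃ {a // trip x0 y' z' a = p} :=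
    fun p => Fintype.equivOfCardEq (hfib p)
  set σ : Equiv.Perm (Fin n) := Equiv.ofFiberEquiv e with hσdef
  have key : ∀ a, trip x0 y' z' (σ a) = trip x0 y z a := fun a => Equiv.ofFiberEquiv_map e a
  have k1 : ∀ a, σ a ∈ x0 ↔ a ∈ x0 := by
    intro a; have := congrArg Prod.fst (key a); simpa [trip] using this
  have k2 : ∀ a, σ a ∈ y' ↔ a ∈ y := by
    intro a; have := congrArg (fun q => q.2.1) (key a); simpa [trip] using this
  have k3 : ∀ a, σ a ∈ z' ↔ a ∈ z := by
    intro a; have := congrArg (fun q => q.2.2) (key a); simpa [trip] using this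
  have him : ∀ (s t : Finset (Fin n)), (∀ a, σ a ∈ t ↔ a ∈ s) → s.image σ = t := by
    intro s t h
    ext b
    simp only [mem_image]
    constructor
    · rintro ⟨a, haa, rfl⟩; exact (h a).mpr haa
    · intro hb; exact ⟨σ.symm b, (h _).mp (by simpa using hb), by simp⟩
  exact ⟨σ, him x0 x0 k1, him y y' k2, him z z' k3⟩

/-- `permAct` as an equivalence. -/
def permEquiv (m : ℕ) (σ : Equiv.Perm (Fin (2*m+1))) :
    DoubledOddVertex m ≃ DoubledOddVertex m where
  toFun := permAct m σ
  invFun := permAct m σ.symm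
  left_inv y := by
    apply Subtype.ext
    show (y.val.image σ).image σ.symm = y.val
    rw [Finset.image_image]
    simp
  right_inv y := by
    apply Subtype.ext
    show (y.val.image σ.symm).image σ = y.val
    rw [Finset.image_image]
    simp

lemma rho_image {n : ℕ} (x0 : Finset (Fin n)) (σ : Equiv.Perm (Fin n))
    (hσ : x0.image σ = x0) (s t : Finset (Fin n)) :
    rho x0 (s.image σ) (t.image σ) = rho x0 s t := by
  have h : ∀ A B : Finset (Fin n), (A.image σ) ∩ (B.image σ) = (A ∩ B).image σ :=
    fun A B => (Finset.image_inter _ _ σ.injective).symm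
  have hc : ∀ A : Finset (Fin n), (A.image σ).card = A.card :=
    fun A => Finset.card_image_of_injective _ σ.injective
  unfold rho
  conv_lhs => rw [← hσ]
  simp [h, hc]

variable (m : ℕ) (x0 : Finset (Fin (2*m+1)))

def Good (M : Matrix (DoubledOddVertex m) (DoubledOddVertex m) ℂ) : Prop :=
  (∀ y z : DoubledOddVertex m, ¬(y.1.card = m ∧ z.1.card = m) → M y z = 0) ∧
  (∀ y z y' z' : DoubledOddVertex m, y.1.card = m → z.1.card = m → y'.1.card = m →
    z'.1.card = m → rho x0 y.1 z.1 = rho x0 y'.1 z'.1 → M y z = M y' z')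

lemma good_of_mem_span (M : Matrix (DoubledOddVertex m) (DoubledOddVertex m) ℂ)
    (hM : M ∈ Submodule.span ℂ
      {B | ∃ q ∈ quadSet m x0 m m, B = orbitMatrix m x0 m m q}) : Good m x0 M := by
  induction hM using Submodule.span_induction with
  | mem B hB =>
    obtain ⟨q, -, rfl⟩ := hB
    constructor
    · intro y z hyz
      show (if y.1.card = m ∧ z.1.card = m ∧ rho x0 y.1 z.1 = q then (1:ℂ) else 0) = 0
      rw [if_neg]; rintro ⟨h1, h2, -⟩; exact hyz ⟨h1, h2⟩
    · intro y z y' z' hy hz hy' hz' hρ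
      show (if y.1.card = m ∧ z.1.card = m ∧ rho x0 y.1 z.1 = q then (1:ℂ) else 0)
        = (if y'.1.card = m ∧ z'.1.card = m ∧ rho x0 y'.1 z'.1 = q then (1:ℂ) else 0)
      rw [hρ]
      simp [hy, hz, hy', hz']
  | zero => exact ⟨fun _ _ _ => rfl, fun _ _ _ _ _ _ _ _ _ => rfl⟩
  | add A B _ _ hA hB =>
    exact ⟨fun y z h => by simp [Matrix.add_apply, hA.1 y z h, hB.1 y z h],
      fun y z y' z' h1 h2 h3 h4 h5 => by
        simp [Matrix.add_apply, hA.2 y z y' z' h1 h2 h3 h4 h5, hB.2 y z y' z' h1 h2 h3 h4 h5]⟩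
  | smul c A _ hA =>
    exact ⟨fun y z h => by simp [Matrix.smul_apply, hA.1 y z h],
      fun y z y' z' h1 h2 h3 h4 h5 => by
        simp [Matrix.smul_apply, hA.2 y z y' z' h1 h2 h3 h4 h5]⟩

lemma good_mul (M N : Matrix (DoubledOddVertex m) (DoubledOddVertex m) ℂ)
    (hM : Good m x0 M) (hN : Good m x0 N) : Good m x0 (M * N) := by
  constructor
  · intro y z hyz
    rw [Matrix.mul_apply]
    apply Finset.sum_eq_zero
    intro w _
    by_cases hy : y.1.card = m
    · have hz : ¬ z.1.card = m := fun h => hyz ⟨hy, h⟩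
      rw [hN.1 w z (fun h => hz h.2), mul_zero]
    · rw [hM.1 y w (fun h => hy h.1), zero_mul]
  · intro y z y' z' hy hz hy' hz' hρ
    have hρ' : (x0 ∩ y.1).card = (x0 ∩ y'.1).card ∧ (x0 ∩ z.1).card = (x0 ∩ z'.1).card ∧
        (y.1 ∩ z.1).card = (y'.1 ∩ z'.1).card ∧
        (x0 ∩ y.1 ∩ z.1).card = (x0 ∩ y'.1 ∩ z'.1).card := by
      unfold rho at hρ
      simp only [Prod.mk.injEq, Nat.cast_inj] at hρ
      exact hρ
    obtain ⟨σ, hσ0, hσy, hσz⟩ := exists_perm x0 y.1 z.1 y'.1 z'.1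
      (by rw [hy, hy']) (by rw [hz, hz']) hρ'.1 hρ'.2.1 hρ'.2.2.1 hρ'.2.2.2
    rw [Matrix.mul_apply, Matrix.mul_apply]
    rw [← Equiv.sum_comp (permEquiv m σ) (fun w => M y' w * N w z')]
    apply Finset.sum_congr rfl
    intro w _
    show M y w * N w z = M y' (permAct m σ w) * N (permAct m σ w) z'
    have hewcard : (permAct m σ w).1.card = w.1.card := by
      show (w.1.image σ).card = w.1.card
      exact Finset.card_image_of_injective _ σ.injective
    by_cases hw : w.1.card = m
    · have hew : (permAct m σ w).1.card = m := by rw [hewcard, hw]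
      have r1 : rho x0 y.1 w.1 = rho x0 y'.1 (permAct m σ w).1 := by
        show rho x0 y.1 w.1 = rho x0 y'.1 (w.1.image σ)
        rw [← hσy]
        exact (rho_image x0 σ hσ0 y.1 w.1).symm
      have r2 : rho x0 w.1 z.1 = rho x0 (permAct m σ w).1 z'.1 := by
        show rho x0 w.1 z.1 = rho x0 (w.1.image σ) z'.1
        rw [← hσz]
        exact (rho_image x0 σ hσ0 w.1 z.1).symm
      rw [hM.2 y w y' (permAct m σ w) hy hw hy' hew r1,
        hN.2 w z (permAct m σ w) z' hw hz hew hz' r2]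
    · have hew : ¬ (permAct m σ w).1.card = m := by rw [hewcard]; exact hw
      rw [hM.1 y w (fun h => hw h.2), hM.1 y' (permAct m σ w) (fun h => hew h.2),
        zero_mul, zero_mul]

lemma mem_span_of_good (M : Matrix (DoubledOddVertex m) (DoubledOddVertex m) ℂ)
    (hM : Good m x0 M) :
    M ∈ Submodule.span ℂ {B | ∃ q ∈ quadSet m x0 m m, B = orbitMatrix m x0 m m q} := by
  classical
  let K : (ℤ×ℤ×ℤ×ℤ) → ℂ := fun q =>
    ((univ.filter (fun p : DoubledOddVertex m × DoubledOddVertex m =>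
      p.1.1.card = m ∧ p.2.1.card = m ∧ rho x0 p.1.1 p.2.1 = q)).card : ℂ)
  have hMeq : M = ∑ p : DoubledOddVertex m × DoubledOddVertex m,
      (if p.1.1.card = m ∧ p.2.1.card = m then M p.1 p.2 / K (rho x0 p.1.1 p.2.1) else 0) •
        orbitMatrix m x0 m m (rho x0 p.1.1 p.2.1) := by
    ext y z
    rw [Matrix.sum_apply]
    by_cases hyz : y.1.card = m ∧ z.1.card = m
    · have step : ∀ p ∈ (univ : Finset (DoubledOddVertex m × DoubledOddVertex m)),
        ((if p.1.1.card = m ∧ p.2.1.card = m then M p.1 p.2 / K (rho x0 p.1.1 p.2.1) else 0) •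
          orbitMatrix m x0 m m (rho x0 p.1.1 p.2.1)) y z
        = if (p.1.1.card = m ∧ p.2.1.card = m ∧ rho x0 p.1.1 p.2.1 = rho x0 y.1 z.1)
            then M y z / K (rho x0 y.1 z.1) else 0 := by
        intro p _
        simp only [Matrix.smul_apply, orbitMatrix, Matrix.of_apply, smul_eq_mul]
        by_cases hQ : p.1.1.card = m ∧ p.2.1.card = m ∧ rho x0 p.1.1 p.2.1 = rho x0 y.1 z.1
        · rw [if_pos hQ, if_pos ⟨hQ.1, hQ.2.1⟩, if_pos ⟨hyz.1, hyz.2, hQ.2.2.symm⟩, mul_one,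
            hQ.2.2, hM.2 p.1 p.2 y z hQ.1 hQ.2.1 hyz.1 hyz.2 hQ.2.2]
        · rw [if_neg hQ]
          by_cases h1 : p.1.1.card = m ∧ p.2.1.card = m
          · rw [if_pos h1, if_neg, mul_zero]
            rintro ⟨-, -, hr⟩
            exact hQ ⟨h1.1, h1.2, hr.symm⟩
          · rw [if_neg h1, zero_mul]
      rw [Finset.sum_congr rfl step, ← Finset.sum_filter, Finset.sum_const]
      have hpos : 0 < (univ.filter (fun p : DoubledOddVertex m × DoubledOddVertex m =>
          p.1.1.card = m ∧ p.2.1.card = m ∧ rho x0 p.1.1 p.2.1 = rho x0 y.1 z.1)).card :=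
        Finset.card_pos.mpr ⟨(y, z), by simp [hyz.1, hyz.2]⟩
      have hKval : K (rho x0 y.1 z.1) = ((univ.filter (fun p : DoubledOddVertex m × DoubledOddVertex m =>
          p.1.1.card = m ∧ p.2.1.card = m ∧ rho x0 p.1.1 p.2.1 = rho x0 y.1 z.1)).card : ℂ) := rfl
      have hK : K (rho x0 y.1 z.1) ≠ 0 := by
        rw [hKval]
        exact Nat.cast_ne_zero.mpr hpos.ne'
      rw [nsmul_eq_mul, ← hKval, mul_comm, div_mul_cancel₀ _ hK]
    · rw [hM.1 y z hyz]
      symm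
      apply Finset.sum_eq_zero
      intro p _
      simp only [Matrix.smul_apply, orbitMatrix, Matrix.of_apply, smul_eq_mul]
      have hcond : ¬(y.1.card = m ∧ z.1.card = m ∧ rho x0 y.1 z.1 = rho x0 p.1.1 p.2.1) :=
        fun h => hyz ⟨h.1, h.2.1⟩
      rw [if_neg hcond, mul_zero]
  rw [hMeq]
  apply Submodule.sum_mem
  intro p _
  by_cases h1 : p.1.1.card = m ∧ p.2.1.card = m
  · exact Submodule.smul_mem _ _ (Submodule.subset_span
      ⟨rho x0 p.1.1 p.2.1, ⟨p.1.1, p.2.1, h1.1, h1.2, rfl⟩, rfl⟩)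
  · rw [if_neg h1, zero_smul]
    exact Submodule.zero_mem _


end AuxOddGraph

theorem stmt_10 (m : ℕ) (hm : 1 ≤ m) (x0 : Finset (Fin (2*m+1))) (hx0 : x0.card = m) :
    ∀ M N : Matrix (DoubledOddVertex m) (DoubledOddVertex m) ℂ,
      M ∈ Submodule.span ℂ
          {B | ∃ q ∈ quadSet m x0 m m, B = orbitMatrix m x0 m m q} →
      N ∈ Submodule.span ℂ
          {B | ∃ q ∈ quadSet m x0 m m, B = orbitMatrix m x0 m m q} →
      M * N ∈ Submodule.span ℂ
          {B | ∃ q ∈ quadSet m x0 m m, B = orbitMatrix m x0 m m q} := by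
  intro M N hM hN
  exact mem_span_of_good m x0 (M * N)
    (good_mul m x0 M N (good_of_mem_span m x0 M hM) (good_of_mem_span m x0 N hN))
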